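/- In the stated noisy measurement setting, if i is a leaf node for S(x), then for every α > 0 the phase displacement satisfies the tail bound Pr(Δθ_i > α·(πk/δ)·√(2(r·σ_z² + σ_e²))) ≤ 4·e^{−α²/2}. -/

import Mathlib

open MeasureTheory ProbabilityTheory NNReal

/-! Auxiliary lemmas -/

/-- Arc–chord bound: `|arg w| ≤ π * |w - 1|`. -/
lemma aux_abs_arg_le (w : ℂ) : |Complex.arg w| ≤ Real.pi * ‖w - 1‖ := by
  rcases eq_or_ne w 0 with rfl | hw
  · simp only [Complex.arg_zero, abs_zero, zero_sub]
    positivity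
  · set θ := Complex.arg w with hθdef
    have hθ : |θ| ≤ Real.pi := Complex.abs_arg_le_pi w
    have hpi := Real.pi_pos
    -- sin (|θ|/2) = |sin (θ/2)|
    have hsin : Real.sin (|θ| / 2) = |Real.sin (θ / 2)| := by
      rcases abs_cases θ with ⟨h1, h2⟩ | ⟨h1, h2⟩
      · rw [h1, abs_of_nonneg (Real.sin_nonneg_of_nonneg_of_le_pi (by linarith) (by linarith))]
      · rw [h1, show -θ / 2 = -(θ / 2) by ring, Real.sin_neg,
          abs_of_nonpos (Real.sin_nonpos_of_nonpos_of_neg_pi_le (by linarith) (by linarith))]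
    -- |θ| ≤ π * |sin (θ/2)|
    have hkey : |θ| ≤ Real.pi * |Real.sin (θ / 2)| := by
      have h := Real.mul_le_sin (x := |θ| / 2) (by positivity) (by linarith)
      rw [hsin] at h
      have h2 := mul_le_mul_of_nonneg_left h hpi.le
      rw [show Real.pi * (2 / Real.pi * (|θ| / 2)) = |θ| by field_simp] at h2
      exact h2
    -- chord length
    have hchord : ‖Complex.exp (θ * Complex.I) - 1‖ = 2 * |Real.sin (θ / 2)| := by
      have habs2 : ‖Complex.exp (θ * Complex.I) - 1‖ ^ 2 = 2 - 2 * Real.cos θ := by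
        rw [Complex.sq_norm, Complex.normSq_apply]
        simp only [Complex.sub_re, Complex.sub_im, Complex.exp_ofReal_mul_I_re,
          Complex.exp_ofReal_mul_I_im, Complex.one_re, Complex.one_im]
        nlinarith [Real.sin_sq_add_cos_sq θ]
      have h4 : (2 * |Real.sin (θ / 2)|) ^ 2 = 2 - 2 * Real.cos θ := by
        rw [Real.abs_sin_half, mul_pow, Real.sq_sqrt (by nlinarith [Real.cos_le_one θ] : (0:ℝ) ≤ (1 - Real.cos θ) / 2)]
        ring
      calc ‖Complex.exp (θ * Complex.I) - 1‖
          = Real.sqrt (‖Complex.exp (θ * Complex.I) - 1‖ ^ 2) :=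
            (Real.sqrt_sq (norm_nonneg _)).symm
        _ = Real.sqrt ((2 * |Real.sin (θ / 2)|) ^ 2) := by rw [habs2, h4]
        _ = 2 * |Real.sin (θ / 2)| := Real.sqrt_sq (by positivity)
    -- chord ≤ 2 |w - 1|
    have hsub : ‖Complex.exp (θ * Complex.I) - 1‖ ≤ 2 * ‖w - 1‖ := by
      have h1 : ‖Complex.exp (θ * Complex.I) - w‖ = |1 - ‖w‖| := by
        conv_lhs => rw [← Complex.norm_mul_exp_arg_mul_I w, ← hθdef]
        rw [show Complex.exp (↑θ * Complex.I) - ↑(‖w‖) * Complex.exp (↑θ * Complex.I)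
            = (1 - (‖w‖ : ℂ)) * Complex.exp (↑θ * Complex.I) by ring,
          norm_mul, Complex.norm_exp_ofReal_mul_I, mul_one]
        rw [show (1 - (‖w‖ : ℂ)) = ((1 - ‖w‖ : ℝ) : ℂ) by push_cast; ring,
          Complex.norm_real, Real.norm_eq_abs]
      have h2 : |1 - ‖w‖| ≤ ‖w - 1‖ := by
        have := abs_norm_sub_norm_le w 1
        rw [norm_one] at this
        rw [abs_sub_comm]
        exact this
      calc ‖Complex.exp (θ * Complex.I) - 1‖
          ≤ ‖Complex.exp (θ * Complex.I) - w‖ + ‖w - 1‖ :=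
            norm_sub_le_norm_sub_add_norm_sub _ _ _
        _ ≤ ‖w - 1‖ + ‖w - 1‖ := by rw [h1]; linarith [h2]
        _ = 2 * ‖w - 1‖ := by ring
    rw [hchord] at hsub
    nlinarith

/-- complete the square for the gaussian pdf -/
lemma aux_complete_square (v : ℝ≥0) (hv : v ≠ 0) (c y : ℝ) :
    Real.exp (c * y) * gaussianPDFReal 0 v y
      = Real.exp ((v : ℝ) * c ^ 2 / 2) * gaussianPDFReal ((v : ℝ) * c) v y := by
  have hv' : (0 : ℝ) < v := by positivity
  unfold gaussianPDFReal
  have hB : c * y + -(y - 0) ^ 2 / (2 * (v : ℝ))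
      = (v : ℝ) * c ^ 2 / 2 + -(y - (v : ℝ) * c) ^ 2 / (2 * (v : ℝ)) := by
    field_simp
    ring
  calc Real.exp (c * y) * ((Real.sqrt (2 * Real.pi * (v : ℝ)))⁻¹ * Real.exp (-(y - 0) ^ 2 / (2 * (v : ℝ))))
      = (Real.sqrt (2 * Real.pi * (v : ℝ)))⁻¹ * Real.exp (c * y + -(y - 0) ^ 2 / (2 * (v : ℝ))) := by
        rw [Real.exp_add]; ring
    _ = (Real.sqrt (2 * Real.pi * (v : ℝ)))⁻¹
        * Real.exp ((v : ℝ) * c ^ 2 / 2 + -(y - (v : ℝ) * c) ^ 2 / (2 * (v : ℝ))) := by rw [hB]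
    _ = Real.exp ((v : ℝ) * c ^ 2 / 2)
        * ((Real.sqrt (2 * Real.pi * (v : ℝ)))⁻¹ * Real.exp (-(y - (v : ℝ) * c) ^ 2 / (2 * (v : ℝ)))) := by
        rw [Real.exp_add]; ring

lemma aux_gauss_exp_integrable (v : ℝ≥0) (c : ℝ) :
    Integrable (fun y => Real.exp (c * y)) (gaussianReal 0 v) := by
  rcases eq_or_ne v 0 with rfl | hv
  · rw [gaussianReal_zero_var]
    have h := ae_eq_dirac (a := (0:ℝ)) (fun y => Real.exp (c * y))
    exact (integrable_const _).congr h.symm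
  · rw [gaussianReal_of_var_ne_zero _ hv]
    rw [integrable_withDensity_iff (measurable_gaussianPDF _ _)
      (ae_of_all _ fun y => ENNReal.ofReal_lt_top)]
    have : (fun y => Real.exp (c * y) * (gaussianPDF 0 v y).toReal)
        = fun y => Real.exp ((v : ℝ) * c ^ 2 / 2) * gaussianPDFReal ((v : ℝ) * c) v y := by
      funext y
      rw [gaussianPDF_def, ENNReal.toReal_ofReal (gaussianPDFReal_nonneg _ _ _)]
      exact aux_complete_square v hv c y
    rw [this]
    exact (integrable_gaussianPDFReal _ _).const_mul _

lemma aux_gauss_mgf (v : ℝ≥0) (c : ℝ) :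
    ∫ y, Real.exp (c * y) ∂gaussianReal 0 v = Real.exp ((v : ℝ) * c ^ 2 / 2) := by
  rcases eq_or_ne v 0 with rfl | hv
  · rw [gaussianReal_zero_var, integral_dirac]
    simp
  · rw [gaussianReal_of_var_ne_zero _ hv]
    have hpdf : gaussianPDF 0 v = fun y => ((gaussianPDFReal 0 v y).toNNReal : ENNReal) := rfl
    rw [hpdf, integral_withDensity_eq_integral_smul
      ((measurable_gaussianPDFReal 0 v).real_toNNReal) (fun y => Real.exp (c * y))]
    have : (fun y => Real.toNNReal (gaussianPDFReal 0 v y) • Real.exp (c * y))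
        = fun y => Real.exp ((v : ℝ) * c ^ 2 / 2) * gaussianPDFReal ((v : ℝ) * c) v y := by
      funext y
      rw [NNReal.smul_def, smul_eq_mul, Real.coe_toNNReal _ (gaussianPDFReal_nonneg _ _ _),
        mul_comm]
      exact aux_complete_square v hv c y
    rw [this, integral_const_mul, integral_gaussianPDFReal_eq_one _ hv, mul_one]

lemma aux_integral_pi_eq_prod {ι : Type*} [Fintype ι] (μ : ι → Measure ℝ)
    [∀ j, SigmaFinite (μ j)] (f : ι → ℝ → ℝ) :
    ∫ y, ∏ j, f j (y j) ∂Measure.pi μ = ∏ j, ∫ t, f j t ∂μ j :=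
  MeasureTheory.integral_fintype_prod_eq_prod (𝕜 := ℝ) (E := fun _ => ℝ) f (μ := μ)

lemma aux_integrable_pi_prod {ι : Type*} [Fintype ι] (μ : ι → Measure ℝ)
    [∀ j, SigmaFinite (μ j)] (f : ι → ℝ → ℝ) (hf : ∀ j, Integrable (f j) (μ j)) :
    Integrable (fun y : ι → ℝ => ∏ j, f j (y j)) (Measure.pi μ) :=
  MeasureTheory.Integrable.fintype_prod_dep (𝕜 := ℝ) (E := fun _ => ℝ) (f := f) (μ := μ) hf

section Chernoff

variable {n : ℕ} (v : Fin n → ℝ≥0) (w1 w2 : ℝ≥0)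

lemma aux_mgf_total (c : Fin n → ℝ) (a b : ℝ) :
    Integrable (fun ω : (Fin n → ℝ) × ℝ × ℝ =>
        Real.exp (∑ j, c j * ω.1 j + (a * ω.2.1 + b * ω.2.2)))
      ((Measure.pi fun j => gaussianReal 0 (v j)).prod
        ((gaussianReal 0 w1).prod (gaussianReal 0 w2))) ∧
    ∫ ω : (Fin n → ℝ) × ℝ × ℝ,
        Real.exp (∑ j, c j * ω.1 j + (a * ω.2.1 + b * ω.2.2))
        ∂((Measure.pi fun j => gaussianReal 0 (v j)).prod
          ((gaussianReal 0 w1).prod (gaussianReal 0 w2)))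
      = Real.exp ((∑ j, c j ^ 2 * (v j : ℝ) + (a ^ 2 * (w1 : ℝ) + b ^ 2 * (w2 : ℝ))) / 2) := by
  have hfun : (fun ω : (Fin n → ℝ) × ℝ × ℝ =>
      Real.exp (∑ j, c j * ω.1 j + (a * ω.2.1 + b * ω.2.2)))
      = fun ω : (Fin n → ℝ) × ℝ × ℝ =>
        (∏ j, Real.exp (c j * ω.1 j)) *
          ((fun p : ℝ × ℝ => Real.exp (a * p.1) * Real.exp (b * p.2)) ω.2) := by
    funext ω
    rw [Real.exp_add, Real.exp_sum, Real.exp_add]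
  constructor
  · rw [hfun]
    exact Integrable.mul_prod
      (aux_integrable_pi_prod _ _ fun j => aux_gauss_exp_integrable (v j) (c j))
      (Integrable.mul_prod (aux_gauss_exp_integrable w1 a) (aux_gauss_exp_integrable w2 b))
  · rw [hfun,
      MeasureTheory.integral_prod_mul (f := fun y : Fin n → ℝ => ∏ j, Real.exp (c j * y j))
        (g := fun p : ℝ × ℝ => Real.exp (a * p.1) * Real.exp (b * p.2)),
      MeasureTheory.integral_prod_mul (f := fun t : ℝ => Real.exp (a * t))
        (g := fun t : ℝ => Real.exp (b * t)),
      aux_integral_pi_eq_prod (fun j => gaussianReal 0 (v j)) (fun j t => Real.exp (c j * t))]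
    simp_rw [aux_gauss_mgf]
    rw [← Real.exp_sum, ← Real.exp_add, ← Real.exp_add]
    congr 1
    rw [eq_div_iff (by norm_num : (2:ℝ) ≠ 0), add_mul, Finset.sum_mul]
    congr 1
    · exact Finset.sum_congr rfl fun j _ => by ring
    · ring

lemma aux_chernoff (c : Fin n → ℝ) (a b : ℝ) (s l : ℝ) (hl : 0 ≤ l) :
    ((Measure.pi fun j => gaussianReal 0 (v j)).prod
        ((gaussianReal 0 w1).prod (gaussianReal 0 w2)))
      {ω : (Fin n → ℝ) × ℝ × ℝ | s < ∑ j, c j * ω.1 j + (a * ω.2.1 + b * ω.2.2)}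
      ≤ ENNReal.ofReal (Real.exp
          ((∑ j, c j ^ 2 * (v j : ℝ) + (a ^ 2 * (w1 : ℝ) + b ^ 2 * (w2 : ℝ))) * l ^ 2 / 2
            - l * s)) := by
  set μtot := (Measure.pi fun j => gaussianReal 0 (v j)).prod
    ((gaussianReal 0 w1).prod (gaussianReal 0 w2)) with hμtot
  set S : (Fin n → ℝ) × ℝ × ℝ → ℝ :=
    fun ω => ∑ j, c j * ω.1 j + (a * ω.2.1 + b * ω.2.2) with hSdef
  set T : ℝ := ∑ j, c j ^ 2 * (v j : ℝ) + (a ^ 2 * (w1 : ℝ) + b ^ 2 * (w2 : ℝ)) with hTdef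
  obtain ⟨hint, hval⟩ := aux_mgf_total v w1 w2 (fun j => l * c j) (l * a) (l * b)
  have hS : ∀ ω : (Fin n → ℝ) × ℝ × ℝ,
      (∑ j, (l * c j) * ω.1 j + ((l * a) * ω.2.1 + (l * b) * ω.2.2)) = l * S ω := by
    intro ω
    simp only [hSdef]
    rw [mul_add, mul_add, Finset.mul_sum]
    simp only [mul_assoc]
  have hfun : (fun ω : (Fin n → ℝ) × ℝ × ℝ =>
      Real.exp (∑ j, (l * c j) * ω.1 j + ((l * a) * ω.2.1 + (l * b) * ω.2.2)))
      = fun ω => Real.exp (l * S ω) := by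
    funext ω; rw [hS]
  rw [hfun] at hint hval
  have hexp : (∑ j, (l * c j) ^ 2 * (v j : ℝ)
      + ((l * a) ^ 2 * (w1 : ℝ) + (l * b) ^ 2 * (w2 : ℝ))) / 2 = T * l ^ 2 / 2 := by
    rw [hTdef, show ∑ j, (l * c j) ^ 2 * (v j : ℝ) = l ^ 2 * ∑ j, c j ^ 2 * (v j : ℝ) by
      rw [Finset.mul_sum]; exact Finset.sum_congr rfl fun j _ => by ring]
    ring
  rw [hexp] at hval
  have hS_meas : Measurable S := by
    apply Measurable.add
    · exact Finset.measurable_sum (f := fun j (ω : (Fin n → ℝ) × ℝ × ℝ) => c j * ω.1 j) _ fun j _ =>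
        by fun_prop
    · exact ((measurable_fst.comp measurable_snd).const_mul a).add
        ((measurable_snd.comp measurable_snd).const_mul b)
  have hf_meas : Measurable fun ω => ENNReal.ofReal (Real.exp (l * S ω)) :=
    ENNReal.measurable_ofReal.comp (Real.measurable_exp.comp (hS_meas.const_mul l))
  have hmarkov := mul_meas_ge_le_lintegral₀ (μ := μtot) hf_meas.aemeasurable
    (ENNReal.ofReal (Real.exp (l * s)))
  have hsub : {ω : (Fin n → ℝ) × ℝ × ℝ | s < S ω}
      ⊆ {ω | ENNReal.ofReal (Real.exp (l * s)) ≤ ENNReal.ofReal (Real.exp (l * S ω))} :=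
    fun ω hω => ENNReal.ofReal_le_ofReal (Real.exp_le_exp.mpr
      (mul_le_mul_of_nonneg_left (le_of_lt hω) hl))
  have hlint : ∫⁻ ω, ENNReal.ofReal (Real.exp (l * S ω)) ∂μtot
      = ENNReal.ofReal (Real.exp (T * l ^ 2 / 2)) := by
    rw [← ofReal_integral_eq_lintegral_ofReal hint
      (ae_of_all _ fun ω => (Real.exp_pos _).le), hval]
  calc μtot {ω | s < S ω}
      ≤ μtot {ω | ENNReal.ofReal (Real.exp (l * s)) ≤ ENNReal.ofReal (Real.exp (l * S ω))} :=
        measure_mono hsub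
    _ ≤ (∫⁻ ω, ENNReal.ofReal (Real.exp (l * S ω)) ∂μtot) / ENNReal.ofReal (Real.exp (l * s)) := by
        rw [ENNReal.le_div_iff_mul_le
          (Or.inl (by simp [Real.exp_pos])) (Or.inl ENNReal.ofReal_ne_top), mul_comm]
        exact hmarkov
    _ = ENNReal.ofReal (Real.exp (T * l ^ 2 / 2)) / ENNReal.ofReal (Real.exp (l * s)) := by
        rw [hlint]
    _ = ENNReal.ofReal (Real.exp (T * l ^ 2 / 2 - l * s)) := by
        rw [← ENNReal.ofReal_div_of_pos (Real.exp_pos _), ← Real.exp_sub]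

lemma aux_tail (c : Fin n → ℝ) (a b : ℝ) (V α : ℝ)
    (hV : ∑ j, c j ^ 2 * (v j : ℝ) + (a ^ 2 * (w1 : ℝ) + b ^ 2 * (w2 : ℝ)) ≤ V)
    (hα : 0 < α) :
    ((Measure.pi fun j => gaussianReal 0 (v j)).prod
        ((gaussianReal 0 w1).prod (gaussianReal 0 w2)))
      {ω : (Fin n → ℝ) × ℝ × ℝ |
        α * Real.sqrt V < ∑ j, c j * ω.1 j + (a * ω.2.1 + b * ω.2.2)}
      ≤ ENNReal.ofReal (Real.exp (-α ^ 2 / 2)) := by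
  set μtot := (Measure.pi fun j => gaussianReal 0 (v j)).prod
    ((gaussianReal 0 w1).prod (gaussianReal 0 w2)) with hμtot
  set T : ℝ := ∑ j, c j ^ 2 * (v j : ℝ) + (a ^ 2 * (w1 : ℝ) + b ^ 2 * (w2 : ℝ)) with hTdef
  have hT0 : 0 ≤ T := by
    apply add_nonneg
    · exact Finset.sum_nonneg fun j _ => by positivity
    · positivity
  have hV0 : 0 ≤ V := hT0.trans hV
  rcases eq_or_lt_of_le hV0 with hV0' | hVpos
  · -- V = 0
    have hT : T = 0 := le_antisymm (hV.trans_eq hV0'.symm) hT0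
    have hnull : ∀ ε : ℝ, 0 < ε →
        μtot {ω : (Fin n → ℝ) × ℝ × ℝ | ε < ∑ j, c j * ω.1 j + (a * ω.2.1 + b * ω.2.2)} = 0 := by
      intro ε hε
      have hb : ∀ m : ℕ,
          μtot {ω : (Fin n → ℝ) × ℝ × ℝ | ε < ∑ j, c j * ω.1 j + (a * ω.2.1 + b * ω.2.2)}
            ≤ (ENNReal.ofReal (Real.exp (-ε))) ^ m := by
        intro m
        have h := aux_chernoff v w1 w2 c a b ε (m : ℝ) (Nat.cast_nonneg m)
        rw [← hTdef, hT] at h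
        refine h.trans (le_of_eq ?_)
        rw [← ENNReal.ofReal_pow (Real.exp_pos _).le, ← Real.exp_nat_mul]
        congr 1
        ring
      have hlim : Filter.Tendsto (fun m : ℕ => (ENNReal.ofReal (Real.exp (-ε))) ^ m)
          Filter.atTop (nhds 0) :=
        ENNReal.tendsto_pow_atTop_nhds_zero_of_lt_one
          (ENNReal.ofReal_lt_one.mpr (Real.exp_lt_one_iff.mpr (by linarith)))
      exact le_antisymm (ge_of_tendsto' hlim hb) zero_le
    rw [← hV0', Real.sqrt_zero, mul_zero]
    have hsub : {ω : (Fin n → ℝ) × ℝ × ℝ | 0 < ∑ j, c j * ω.1 j + (a * ω.2.1 + b * ω.2.2)}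
        ⊆ ⋃ m : ℕ, {ω : (Fin n → ℝ) × ℝ × ℝ |
            1 / ((m : ℝ) + 1) < ∑ j, c j * ω.1 j + (a * ω.2.1 + b * ω.2.2)} := by
      intro ω hω
      have hω' : (0:ℝ) < ∑ j, c j * ω.1 j + (a * ω.2.1 + b * ω.2.2) := hω
      obtain ⟨m, hm⟩ := exists_nat_one_div_lt hω'
      exact Set.mem_iUnion.mpr ⟨m, hm⟩
    calc μtot {ω : (Fin n → ℝ) × ℝ × ℝ | 0 < ∑ j, c j * ω.1 j + (a * ω.2.1 + b * ω.2.2)}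
        ≤ μtot (⋃ m : ℕ, {ω : (Fin n → ℝ) × ℝ × ℝ |
            1 / ((m : ℝ) + 1) < ∑ j, c j * ω.1 j + (a * ω.2.1 + b * ω.2.2)}) :=
          measure_mono hsub
      _ ≤ ∑' m : ℕ, μtot {ω : (Fin n → ℝ) × ℝ × ℝ |
            1 / ((m : ℝ) + 1) < ∑ j, c j * ω.1 j + (a * ω.2.1 + b * ω.2.2)} :=
          measure_iUnion_le _
      _ = 0 := by
          rw [ENNReal.tsum_eq_zero]
          intro m
          exact hnull _ (by positivity)
      _ ≤ ENNReal.ofReal (Real.exp (-α ^ 2 / 2)) := zero_le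
  · -- V > 0
    have hsV : Real.sqrt V ^ 2 = V := Real.sq_sqrt hV0
    have hsVpos : 0 < Real.sqrt V := Real.sqrt_pos.mpr hVpos
    have h := aux_chernoff v w1 w2 c a b (α * Real.sqrt V) (α / Real.sqrt V) (by positivity)
    rw [← hTdef] at h
    refine h.trans (ENNReal.ofReal_le_ofReal (Real.exp_le_exp.mpr ?_))
    have h1 : (α / Real.sqrt V) * (α * Real.sqrt V) = α ^ 2 := by
      field_simp
    have h2 : T * (α / Real.sqrt V) ^ 2 / 2 ≤ α ^ 2 / 2 := by
      rw [div_pow, hsV]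
      have h3 : T * (α ^ 2 / V) ≤ V * (α ^ 2 / V) :=
        mul_le_mul_of_nonneg_right hV (by positivity)
      have h4 : V * (α ^ 2 / V) = α ^ 2 := by field_simp
      linarith
    linarith [h1, h2]

lemma aux_tail_abs (c : Fin n → ℝ) (a b : ℝ) (V α : ℝ)
    (hV : ∑ j, c j ^ 2 * (v j : ℝ) + (a ^ 2 * (w1 : ℝ) + b ^ 2 * (w2 : ℝ)) ≤ V)
    (hα : 0 < α) :
    ((Measure.pi fun j => gaussianReal 0 (v j)).prod
        ((gaussianReal 0 w1).prod (gaussianReal 0 w2)))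
      {ω : (Fin n → ℝ) × ℝ × ℝ |
        α * Real.sqrt V < |∑ j, c j * ω.1 j + (a * ω.2.1 + b * ω.2.2)|}
      ≤ ENNReal.ofReal (2 * Real.exp (-α ^ 2 / 2)) := by
  have h1 := aux_tail v w1 w2 c a b V α hV hα
  have h2 := aux_tail v w1 w2 (fun j => -c j) (-a) (-b) V α (by simpa only [neg_sq] using hV) hα
  have hsub : {ω : (Fin n → ℝ) × ℝ × ℝ |
      α * Real.sqrt V < |∑ j, c j * ω.1 j + (a * ω.2.1 + b * ω.2.2)|}
      ⊆ {ω : (Fin n → ℝ) × ℝ × ℝ |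
          α * Real.sqrt V < ∑ j, c j * ω.1 j + (a * ω.2.1 + b * ω.2.2)}
        ∪ {ω : (Fin n → ℝ) × ℝ × ℝ |
            α * Real.sqrt V < ∑ j, (-c j) * ω.1 j + ((-a) * ω.2.1 + (-b) * ω.2.2)} := by
    intro ω hω
    simp only [Set.mem_setOf_eq] at hω
    rcases lt_abs.mp hω with h | h
    · exact Or.inl h
    · refine Or.inr ?_
      have : ∑ j, (-c j) * ω.1 j + ((-a) * ω.2.1 + (-b) * ω.2.2)
          = -(∑ j, c j * ω.1 j + (a * ω.2.1 + b * ω.2.2)) := by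
        rw [neg_add, ← Finset.sum_neg_distrib]
        congr 1
        · exact Finset.sum_congr rfl fun j _ => by ring
        · ring
      rw [Set.mem_setOf_eq, this]
      exact h
  refine le_trans (measure_mono hsub) (le_trans (measure_union_le _ _) ?_)
  refine le_trans (add_le_add h1 h2) (le_of_eq ?_)
  rw [← ENNReal.ofReal_add (Real.exp_pos _).le (Real.exp_pos _).le]
  congr 1
  ring

end Chernoff

/- STATEMENT 10 -/
set_option maxHeartbeats 2000000 in
open MeasureTheory ProbabilityTheory NNReal in
theorem stmt10 {n m' : ℕ} (A' : Matrix (Fin m') (Fin n) ℂ)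
    (x : Fin n → ℝ) (δ k : ℝ) (hδ : 0 < δ) (hk : 1 ≤ k)
    (σz σe : ℝ≥0) (r : ℕ)
    (hA : ∀ i j, A' i j = 0 ∨ ‖A' i j‖ = 1)
    (i : Fin m')
    (hrow : ((Finset.univ : Finset (Fin n)).filter (fun j => A' i j ≠ 0)).card ≤ r)
    (hx : ∀ j, x j ≠ 0 → δ / k ≤ |x j|)
    (hleaf : ∃! j : Fin n, x j ≠ 0 ∧ A' i j ≠ 0) :
    ∀ α : ℝ, 0 < α →
      ((Measure.pi fun j : Fin n =>
            gaussianReal 0 (if x j = 0 then σz ^ 2 else 0)).prod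
          ((gaussianReal 0 (σe ^ 2)).prod (gaussianReal 0 (σe ^ 2))))
        {ω : (Fin n → ℝ) × ℝ × ℝ |
          α * (Real.pi * k / δ * Real.sqrt (2 * ((r : ℝ) * (σz : ℝ) ^ 2 + (σe : ℝ) ^ 2)))
            < |Complex.arg
                ((A'.mulVec (fun j => ((x j + ω.1 j : ℝ) : ℂ)) i
                    + ((ω.2.1 : ℂ) + (ω.2.2 : ℂ) * Complex.I))
                  / A'.mulVec (fun j => ((x j : ℝ) : ℂ)) i)|}
        ≤ ENNReal.ofReal (4 * Real.exp (-α ^ 2 / 2)) := by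
  intro α hα
  classical
  obtain ⟨j₀, ⟨hxj₀, hAj₀⟩, huniq⟩ := hleaf
  have hk0 : (0:ℝ) < k := lt_of_lt_of_le one_pos hk
  have hδk : 0 < δ / k := div_pos hδ hk0
  set V : ℝ := (r : ℝ) * (σz : ℝ) ^ 2 + (σe : ℝ) ^ 2 with hVdef
  have hV0 : 0 ≤ V := by positivity
  -- the noiseless measurement
  set s : ℂ := A'.mulVec (fun j => ((x j : ℝ) : ℂ)) i with hsdef
  have hs : s = A' i j₀ * ((x j₀ : ℝ) : ℂ) := by
    rw [hsdef, Matrix.mulVec, dotProduct]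
    refine Finset.sum_eq_single j₀ (fun j _ hj => ?_) (fun h => absurd (Finset.mem_univ _) h)
    by_cases hxj : x j = 0
    · rw [hxj]; simp
    · have hAij : A' i j = 0 := by
        by_contra hne
        exact hj (huniq j ⟨hxj, hne⟩)
      rw [hAij, zero_mul]
  have habs1 : ‖A' i j₀‖ = 1 := (hA i j₀).resolve_left hAj₀
  have hsabs : δ / k ≤ ‖s‖ := by
    rw [hs, norm_mul, habs1, one_mul, Complex.norm_real, Real.norm_eq_abs]
    exact hx j₀ hxj₀
  have hs0 : s ≠ 0 := by
    intro h
    rw [h, norm_zero] at hsabs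
    linarith
  -- variance bounds
  have hsum : ∀ c : Fin n → ℝ, (∀ j, c j ^ 2 ≤ 1) → (∀ j, A' i j = 0 → c j = 0) →
      ∑ j, c j ^ 2 * ((if x j = 0 then σz ^ 2 else 0 : ℝ≥0) : ℝ) ≤ (r : ℝ) * (σz : ℝ) ^ 2 := by
    intro c hc1 hc0
    have hterm : ∀ j ∈ Finset.univ,
        c j ^ 2 * ((if x j = 0 then σz ^ 2 else 0 : ℝ≥0) : ℝ)
          ≤ if A' i j ≠ 0 then (σz : ℝ) ^ 2 else 0 := by
      intro j _
      by_cases hAij : A' i j = 0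
      · simp [hc0 j hAij, hAij]
      · rw [if_pos hAij]
        have hvj : ((if x j = 0 then σz ^ 2 else 0 : ℝ≥0) : ℝ) ≤ (σz : ℝ) ^ 2 := by
          split_ifs
          · push_cast
            exact le_refl _
          · push_cast
            positivity
        calc c j ^ 2 * ((if x j = 0 then σz ^ 2 else 0 : ℝ≥0) : ℝ)
            ≤ 1 * (σz : ℝ) ^ 2 := mul_le_mul (hc1 j) hvj (NNReal.coe_nonneg _) one_pos.le
          _ = (σz : ℝ) ^ 2 := one_mul _
    calc ∑ j, c j ^ 2 * ((if x j = 0 then σz ^ 2 else 0 : ℝ≥0) : ℝ)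
        ≤ ∑ j, (if A' i j ≠ 0 then (σz : ℝ) ^ 2 else 0) := Finset.sum_le_sum hterm
      _ = ∑ j ∈ Finset.univ.filter (fun j => A' i j ≠ 0), (σz : ℝ) ^ 2 :=
          (Finset.sum_filter _ _).symm
      _ = ((Finset.univ.filter (fun j => A' i j ≠ 0)).card : ℝ) * (σz : ℝ) ^ 2 := by
          rw [Finset.sum_const, nsmul_eq_mul]
      _ ≤ (r : ℝ) * (σz : ℝ) ^ 2 := by
          apply mul_le_mul_of_nonneg_right _ (by positivity)
          exact_mod_cast hrow
  have hre1 : ∀ j, ((A' i j).re) ^ 2 ≤ 1 := by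
    intro j
    rcases hA i j with h0 | h1
    · rw [h0]; norm_num
    · nlinarith [Complex.sq_norm (A' i j), Complex.normSq_apply (A' i j),
        sq_nonneg (A' i j).im]
  have him1 : ∀ j, ((A' i j).im) ^ 2 ≤ 1 := by
    intro j
    rcases hA i j with h0 | h1
    · rw [h0]; norm_num
    · nlinarith [Complex.sq_norm (A' i j), Complex.normSq_apply (A' i j),
        sq_nonneg (A' i j).re]
  have hcoe_e : ((σe ^ 2 : ℝ≥0) : ℝ) = (σe : ℝ) ^ 2 := by push_cast; ring
  have hTre : ∑ j, ((A' i j).re) ^ 2 * ((if x j = 0 then σz ^ 2 else 0 : ℝ≥0) : ℝ)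
      + ((1:ℝ) ^ 2 * ((σe ^ 2 : ℝ≥0) : ℝ) + (0:ℝ) ^ 2 * ((σe ^ 2 : ℝ≥0) : ℝ)) ≤ V := by
    have h := hsum (fun j => (A' i j).re) hre1 (fun j h0 => by simp [h0])
    rw [hVdef, hcoe_e]
    nlinarith [h]
  have hTim : ∑ j, ((A' i j).im) ^ 2 * ((if x j = 0 then σz ^ 2 else 0 : ℝ≥0) : ℝ)
      + ((0:ℝ) ^ 2 * ((σe ^ 2 : ℝ≥0) : ℝ) + (1:ℝ) ^ 2 * ((σe ^ 2 : ℝ≥0) : ℝ)) ≤ V := by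
    have h := hsum (fun j => (A' i j).im) him1 (fun j h0 => by simp [h0])
    rw [hVdef, hcoe_e]
    nlinarith [h]
  -- subset argument
  have hsubset : {ω : (Fin n → ℝ) × ℝ × ℝ |
      α * (Real.pi * k / δ * Real.sqrt (2 * V))
        < |Complex.arg
            ((A'.mulVec (fun j => ((x j + ω.1 j : ℝ) : ℂ)) i
                + ((ω.2.1 : ℂ) + (ω.2.2 : ℂ) * Complex.I)) / s)|}
      ⊆ {ω : (Fin n → ℝ) × ℝ × ℝ |
          α * Real.sqrt V < |∑ j, (A' i j).re * ω.1 j + (1 * ω.2.1 + 0 * ω.2.2)|}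
        ∪ {ω : (Fin n → ℝ) × ℝ × ℝ |
            α * Real.sqrt V < |∑ j, (A' i j).im * ω.1 j + (0 * ω.2.1 + 1 * ω.2.2)|} := by
    intro ω hω
    simp only [Set.mem_setOf_eq] at hω
    set y : ℂ := A'.mulVec (fun j => ((x j + ω.1 j : ℝ) : ℂ)) i
      + ((ω.2.1 : ℂ) + (ω.2.2 : ℂ) * Complex.I) with hydef
    have hNdef : y - s = (∑ j, A' i j * ((ω.1 j : ℝ) : ℂ))
        + ((ω.2.1 : ℂ) + (ω.2.2 : ℂ) * Complex.I) := by
      rw [hydef, hsdef, Matrix.mulVec, Matrix.mulVec, dotProduct, dotProduct]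
      have hterm : ∀ j ∈ Finset.univ, A' i j * ((x j + ω.1 j : ℝ) : ℂ)
          = A' i j * ((x j : ℝ) : ℂ) + A' i j * ((ω.1 j : ℝ) : ℂ) := by
        intro j _
        push_cast
        ring
      rw [Finset.sum_congr rfl hterm, Finset.sum_add_distrib]
      ring
    have hre : (y - s).re = ∑ j, (A' i j).re * ω.1 j + (1 * ω.2.1 + 0 * ω.2.2) := by
      rw [hNdef]
      simp only [Complex.add_re, Complex.re_sum, Complex.mul_re, Complex.ofReal_re,
        Complex.ofReal_im, Complex.mul_im, Complex.I_re, Complex.I_im]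
      ring_nf
    have him : (y - s).im = ∑ j, (A' i j).im * ω.1 j + (0 * ω.2.1 + 1 * ω.2.2) := by
      rw [hNdef]
      simp only [Complex.add_im, Complex.im_sum, Complex.mul_re, Complex.ofReal_re,
        Complex.ofReal_im, Complex.mul_im, Complex.I_re, Complex.I_im]
      ring_nf
    -- the arg bound
    have harg := aux_abs_arg_le (y / s)
    have habsdiv : ‖y / s - 1‖ = ‖y - s‖ / ‖s‖ := by
      rw [div_sub_one hs0, norm_div]
    have hstep : α * Real.sqrt (2 * V) < ‖y - s‖ := by
      have hA' : (0:ℝ) < Real.pi * k / δ := by positivity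
      have h3 : ‖y - s‖ / ‖s‖ ≤ ‖y - s‖ * (k / δ) := by
        rw [div_eq_mul_inv]
        refine mul_le_mul_of_nonneg_left ?_ (norm_nonneg _)
        have hinv : (‖s‖)⁻¹ ≤ (δ / k)⁻¹ := inv_anti₀ hδk hsabs
        rwa [inv_div] at hinv
      have hlt : (Real.pi * k / δ) * (α * Real.sqrt (2 * V))
          < (Real.pi * k / δ) * ‖y - s‖ := by
        calc (Real.pi * k / δ) * (α * Real.sqrt (2 * V))
            = α * (Real.pi * k / δ * Real.sqrt (2 * V)) := by ring
          _ < |Complex.arg (y / s)| := hω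
          _ ≤ Real.pi * ‖y / s - 1‖ := harg
          _ = Real.pi * (‖y - s‖ / ‖s‖) := by rw [habsdiv]
          _ ≤ Real.pi * (‖y - s‖ * (k / δ)) :=
              mul_le_mul_of_nonneg_left h3 Real.pi_pos.le
          _ = (Real.pi * k / δ) * ‖y - s‖ := by ring
      exact lt_of_mul_lt_mul_left hlt hA'.le
    have h2V : Real.sqrt (2 * V) ^ 2 = 2 * V := Real.sq_sqrt (by positivity)
    have hVsq : Real.sqrt V ^ 2 = V := Real.sq_sqrt hV0
    have hN2 : ‖y - s‖ ^ 2 = (y - s).re ^ 2 + (y - s).im ^ 2 := by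
      rw [Complex.sq_norm, Complex.normSq_apply]
      ring
    rcases lt_or_ge (α * Real.sqrt V) |∑ j, (A' i j).re * ω.1 j + (1 * ω.2.1 + 0 * ω.2.2)|
      with h | hre_le
    · exact Or.inl h
    rcases lt_or_ge (α * Real.sqrt V) |∑ j, (A' i j).im * ω.1 j + (0 * ω.2.1 + 1 * ω.2.2)|
      with h | him_le
    · exact Or.inr h
    exfalso
    have hα2V : α ^ 2 * (2 * V) < ‖y - s‖ ^ 2 := by
      have h0 : (0:ℝ) ≤ α * Real.sqrt (2 * V) := by positivity
      nlinarith [hstep]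
    have hre2 : ((y - s).re) ^ 2 ≤ α ^ 2 * V := by
      rw [hre]
      have hm := mul_self_le_mul_self
        (abs_nonneg (∑ j, (A' i j).re * ω.1 j + (1 * ω.2.1 + 0 * ω.2.2))) hre_le
      nlinarith [abs_mul_abs_self (∑ j, (A' i j).re * ω.1 j + (1 * ω.2.1 + 0 * ω.2.2))]
    have him2 : ((y - s).im) ^ 2 ≤ α ^ 2 * V := by
      rw [him]
      have hm := mul_self_le_mul_self
        (abs_nonneg (∑ j, (A' i j).im * ω.1 j + (0 * ω.2.1 + 1 * ω.2.2))) him_le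
      nlinarith [abs_mul_abs_self (∑ j, (A' i j).im * ω.1 j + (0 * ω.2.1 + 1 * ω.2.2))]
    nlinarith [hN2]
  refine le_trans (measure_mono hsubset) ?_
  refine le_trans (measure_union_le _ _) ?_
  have hRe := aux_tail_abs (fun j => if x j = 0 then σz ^ 2 else 0) (σe ^ 2) (σe ^ 2)
    (fun j => (A' i j).re) 1 0 V α hTre hα
  have hIm := aux_tail_abs (fun j => if x j = 0 then σz ^ 2 else 0) (σe ^ 2) (σe ^ 2)
    (fun j => (A' i j).im) 0 1 V α hTim hα
  refine le_trans (add_le_add hRe hIm) (le_of_eq ?_)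
  rw [← ENNReal.ofReal_add (by positivity) (by positivity)]
  congr 1
  ring
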